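/- arXiv:2010.03075 — 4 statements merged into one kernel-verified Lean document; each statement's English description precedes it below -/
import Mathlib

section
/- For any matrix-valued signal f in L²(a,b; ℂ^{N×N}) and any two constant matrices A, B ∈ ℂ^{N×N}, the two matrix-valued signals A·f and B·f are linearly dependent (i.e., they are not linearly independent). -/
open MeasureTheory Matrix
open scoped ComplexOrder

noncomputable section

/-- The open interval `(a, b)` in `ℝ` with extended-real endpoints. -/
def ival (a b : EReal) : Set ℝ := {t : ℝ | a < (t : EReal) ∧ (t : EReal) < b}

/-- `f` is a matrix-valued signal in `L²(a,b; ℂ^{N×N})`: each of its `N²`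
entry functions is in `L²(a,b)`. -/
def IsSignal {N : ℕ} (a b : EReal) (f : ℝ → Matrix (Fin N) (Fin N) ℂ) : Prop :=
  ∀ k l : Fin N, MemLp (fun t => f t k l) 2 (volume.restrict (ival a b))

/-- The matrix-valued inner product `⟨f,g⟩ = ∫ₐᵇ f(t) g(t)† dt`, defined entrywise. -/
def mvInner {N : ℕ} (a b : EReal) (f g : ℝ → Matrix (Fin N) (Fin N) ℂ) :
    Matrix (Fin N) (Fin N) ℂ :=
  Matrix.of fun k l => ∫ t in ival a b, (f t * (g t)ᴴ) k l

/-- The Frobenius norm of an `N × N` complex matrix. -/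
def frobNorm {N : ℕ} (A : Matrix (Fin N) (Fin N) ℂ) : ℝ :=
  Real.sqrt (∑ k, ∑ l, ‖A k l‖ ^ 2)

/-- Linear independence of matrix-valued signals: whenever `f := ∑ k, F k * f k`
is degenerate (i.e. `⟨f,f⟩` is not invertible), the null space of `(F k)ᴴ`
contains the null space of `⟨f,f⟩`, for every `k`. -/
def LinIndep {N K : ℕ} (a b : EReal) (f : Fin K → ℝ → Matrix (Fin N) (Fin N) ℂ) : Prop :=
  ∀ F : Fin K → Matrix (Fin N) (Fin N) ℂ,
    ¬ IsUnit (mvInner a b (fun t => ∑ k, F k * f k t) (fun t => ∑ k, F k * f k t)) →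
    ∀ (k : Fin K) (u : Fin N → ℂ),
      (mvInner a b (fun t => ∑ j, F j * f j t) (fun t => ∑ j, F j * f j t)).mulVec u = 0 →
      ((F k)ᴴ).mulVec u = 0

/-- for any signal `f` and constant matrices `A, B`, the signals
`A·f` and `B·f` are linearly dependent. -/
theorem stmt_5 {N : ℕ} (hN : 1 ≤ N) (a b : EReal) (hab : a < b)
    (f : ℝ → Matrix (Fin N) (Fin N) ℂ) (hf : IsSignal a b f)
    (A B : Matrix (Fin N) (Fin N) ℂ) :
    ¬ LinIndep a b ![fun t => A * f t, fun t => B * f t] := by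
  intro h
  -- find (x, y) ≠ 0 with x ᵥ* A + y ᵥ* B = 0 by a dimension count
  set L : ((Fin N → ℂ) × (Fin N → ℂ)) →ₗ[ℂ] (Fin N → ℂ) :=
    LinearMap.coprod A.vecMulLinear B.vecMulLinear with hL
  have hninj : ¬ Function.Injective L := by
    intro hinj
    have := LinearMap.finrank_le_finrank_of_injective hinj
    simp [Module.finrank_prod] at this
    omega
  rw [Function.not_injective_iff] at hninj
  obtain ⟨p, q, hpq, hne⟩ := hninj
  set x : Fin N → ℂ := p.1 - q.1 with hx
  set y : Fin N → ℂ := p.2 - q.2 with hy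
  have hker : x ᵥ* A + y ᵥ* B = 0 := by
    have : L (p - q) = 0 := by rw [map_sub, hpq, sub_self]
    simpa [hL, LinearMap.coprod_apply, hx, hy, Matrix.sub_vecMul] using this
  have hxy : x ≠ 0 ∨ y ≠ 0 := by
    by_contra hc
    push_neg at hc
    apply hne
    have h1 : p.1 = q.1 := by have := hc.1; rwa [hx, sub_eq_zero] at this
    have h2 : p.2 = q.2 := by have := hc.2; rwa [hy, sub_eq_zero] at this
    exact Prod.ext h1 h2
  -- build constant matrices whose every row is x (resp. y)
  set F : Fin 2 → Matrix (Fin N) (Fin N) ℂ :=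
    ![Matrix.of fun _ j => x j, Matrix.of fun _ j => y j] with hF
  have hcomb : F 0 * A + F 1 * B = 0 := by
    ext i j
    have := congrFun hker j
    simpa [hF, Matrix.mul_apply, Matrix.vecMul, dotProduct] using this
  have hzero : (fun t => ∑ k, F k * (![fun t => A * f t, fun t => B * f t]) k t)
      = fun _ => (0 : Matrix (Fin N) (Fin N) ℂ) := by
    funext t
    simp only [Fin.sum_univ_two, Matrix.cons_val_zero, Matrix.cons_val_one, Matrix.head_cons]
    rw [← Matrix.mul_assoc, ← Matrix.mul_assoc, ← Matrix.add_mul, hcomb, Matrix.zero_mul]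
  have hinner : mvInner a b
      (fun t => ∑ k, F k * (![fun t => A * f t, fun t => B * f t]) k t)
      (fun t => ∑ k, F k * (![fun t => A * f t, fun t => B * f t]) k t) = 0 := by
    rw [hzero]
    ext i j
    simp [mvInner]
  have hNE : Nonempty (Fin N) := ⟨⟨0, hN⟩⟩
  have hnotunit : ¬ IsUnit (0 : Matrix (Fin N) (Fin N) ℂ) := by
    rw [Matrix.isUnit_iff_isUnit_det, Matrix.det_zero]
    exact not_isUnit_zero
  have key := h F (by rw [hinner]; exact hnotunit)
  -- derive contradiction: (F k)ᴴ must kill every vector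
  have hall : ∀ (k : Fin 2) (u : Fin N → ℂ), ((F k)ᴴ).mulVec u = 0 := by
    intro k u
    exact key k u (by rw [hinner, Matrix.zero_mulVec])
  rcases hxy with hx0 | hy0
  · obtain ⟨j, hj⟩ := Function.ne_iff.mp hx0
    have := congrFun (hall 0 (Pi.single ⟨0, hN⟩ 1)) j
    simp [hF, Matrix.mulVec, dotProduct, Matrix.conjTranspose_apply,
      Pi.single_apply] at this
    exact hj (by simpa using (starRingEnd ℂ).injective (by simpa using this))
  · obtain ⟨j, hj⟩ := Function.ne_iff.mp hy0
    have := congrFun (hall 1 (Pi.single ⟨0, hN⟩ 1)) j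
    simp [hF, Matrix.mulVec, dotProduct, Matrix.conjTranspose_apply,
      Pi.single_apply] at this
    exact hj (by simpa using (starRingEnd ℂ).injective (by simpa using this))

end
end

section
/- Let S_1, …, S_p be a partition of the index set {1, 2, …, K} into nonempty sets. For each i = 1, …, p, let G_{k} ∈ ℂ^{N×N} for k ∈ S_i be constant matrices at least one of which is invertible. If matrix-valued signals f_1, …, f_K in L²(a,b; ℂ^{N×N}) are linearly independent, then the p matrix-valued signals h_i := ∑_{k ∈ S_i} G_k f_k, i = 1, …, p, are linearly independent. -/
open MeasureTheory Matrix
open scoped ComplexOrder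

noncomputable section

/-- block linear combinations, over a partition of the index set,
of linearly independent signals with at least one invertible coefficient in
each block are linearly independent. -/
theorem stmt_6 {N K p : ℕ} (a b : EReal) (hab : a < b)
    (f : Fin K → ℝ → Matrix (Fin N) (Fin N) ℂ) (hf : ∀ k, IsSignal a b (f k))
    (S : Fin p → Finset (Fin K))
    (hdisj : ∀ i j : Fin p, i ≠ j → Disjoint (S i) (S j))
    (hcover : ∀ k : Fin K, ∃ i : Fin p, k ∈ S i)
    (hne : ∀ i : Fin p, (S i).Nonempty)
    (G : Fin K → Matrix (Fin N) (Fin N) ℂ)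
    (hG : ∀ i : Fin p, ∃ k ∈ S i, IsUnit (G k))
    (hli : LinIndep a b f) :
    LinIndep a b (fun i t => ∑ k ∈ S i, G k * f k t) := by
  classical
  intro H hdeg i u hu
  set idx : Fin K → Fin p := fun k => (hcover k).choose with hidx
  have hmem : ∀ k, k ∈ S (idx k) := fun k => (hcover k).choose_spec
  have huniq : ∀ (j : Fin p) (k : Fin K), k ∈ S j → idx k = j := by
    intro j k hk
    by_contra h
    exact (Finset.disjoint_left.mp (hdisj _ _ h) (hmem k)) hk
  set F : Fin K → Matrix (Fin N) (Fin N) ℂ := fun k => H (idx k) * G k with hF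
  have hS : ∀ j : Fin p, S j = Finset.univ.filter (fun k => idx k = j) := by
    intro j
    ext k
    simp only [Finset.mem_filter, Finset.mem_univ, true_and]
    exact ⟨huniq j k, fun h => h ▸ hmem k⟩
  have hpt : (fun t => ∑ j, H j * (fun i t => ∑ k ∈ S i, G k * f k t) j t)
      = (fun t => ∑ k, F k * f k t) := by
    funext t
    calc ∑ j, H j * ∑ k ∈ S j, G k * f k t
        = ∑ j, ∑ k ∈ S j, F k * f k t := by
          refine Finset.sum_congr rfl fun j _ => ?_
          rw [Finset.mul_sum]
          refine Finset.sum_congr rfl fun k hk => ?_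
          simp only [hF, huniq j k hk, mul_assoc]
      _ = ∑ k, F k * f k t := by
          rw [← Finset.sum_fiberwise Finset.univ idx (fun k => F k * f k t)]
          exact Finset.sum_congr rfl fun j _ => by rw [hS j]
  rw [hpt] at hdeg hu
  have key := hli F hdeg
  obtain ⟨k0, hk0, hGk0⟩ := hG i
  have hFk0 := key k0 u hu
  have hik0 : idx k0 = i := huniq i k0 hk0
  rw [hF] at hFk0
  simp only [hik0, Matrix.conjTranspose_mul, ← Matrix.mulVec_mulVec] at hFk0
  have hdet : IsUnit ((G k0)ᴴ).det := by
    rw [Matrix.det_conjTranspose]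
    exact ((Matrix.isUnit_iff_isUnit_det _).mp hGk0).star
  have : ((G k0)ᴴ)⁻¹.mulVec ((G k0)ᴴ.mulVec ((H i)ᴴ.mulVec u)) = 0 := by
    rw [hFk0, Matrix.mulVec_zero]
  rwa [Matrix.mulVec_mulVec, Matrix.nonsing_inv_mul _ hdet, Matrix.one_mulVec] at this

end
end

section
/- Let f_1, f_2 be linearly independent matrix-valued signals in L²(a,b; ℂ^{N×N}), let g_1 := ⟨f_1,f_1⟩^{-1/2} f_1, and let ĝ_2 := f_2 − ⟨f_2, g_1⟩ g_1. Then ĝ_2 is nondegenerate (⟨ĝ_2, ĝ_2⟩ is invertible) and ⟨ĝ_2, g_1⟩ = 0. -/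
open MeasureTheory Matrix
open scoped ComplexOrder

noncomputable section

/-- The positive semidefinite square root of a positive semidefinite matrix
(the former `Matrix.PosSemidef.sqrt`, spelled out with its old definition). -/
def psdSqrt {N : ℕ} {A : Matrix (Fin N) (Fin N) ℂ} (hA : A.PosSemidef) :
    Matrix (Fin N) (Fin N) ℂ :=
  (hA.isHermitian.eigenvectorUnitary : Matrix (Fin N) (Fin N) ℂ) *
    diagonal ((↑) ∘ (√·) ∘ hA.isHermitian.eigenvalues) *
    (star hA.isHermitian.eigenvectorUnitary : Matrix (Fin N) (Fin N) ℂ)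

lemma psdSqrt_mul_self {N : ℕ} {A : Matrix (Fin N) (Fin N) ℂ} (hA : A.PosSemidef) :
    psdSqrt hA * psdSqrt hA = A := by
  have hU := Matrix.UnitaryGroup.star_mul_self hA.isHermitian.eigenvectorUnitary
  conv_rhs => rw [hA.isHermitian.spectral_theorem, Unitary.conjStarAlgAut_apply]
  simp only [psdSqrt]
  rw [show ∀ X Y Z W V : Matrix (Fin N) (Fin N) ℂ, X * Y * Z * (W * Y * V) = X * Y * (Z * W) * Y * V
    from fun X Y Z W V => by simp only [Matrix.mul_assoc]]
  rw [hU, Matrix.mul_one, Matrix.mul_assoc _ (diagonal _) (diagonal _), diagonal_mul_diagonal]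
  congr 3
  funext i
  simp only [Function.comp_apply]
  rw [← Complex.ofReal_mul, Real.mul_self_sqrt (hA.eigenvalues_nonneg i)]
  rfl

lemma psdSqrt_isHermitian {N : ℕ} {A : Matrix (Fin N) (Fin N) ℂ} (hA : A.PosSemidef) :
    (psdSqrt hA)ᴴ = psdSqrt hA := by
  simp only [psdSqrt, Matrix.conjTranspose_mul, Matrix.diagonal_conjTranspose, Matrix.mul_assoc]
  rw [Matrix.star_eq_conjTranspose, Matrix.conjTranspose_conjTranspose]
  congr 2
  · congr 1
    funext i
    simp

namespace Stmt9Aux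

variable {N : ℕ} {a b : EReal}

lemma memLp_star {g : ℝ → ℂ} (hg : MemLp g 2 (volume.restrict (ival a b))) :
    MemLp (fun t => star (g t)) 2 (volume.restrict (ival a b)) :=
  hg.of_le (continuous_star.comp_aestronglyMeasurable hg.1)
    (Filter.Eventually.of_forall fun t => by simp)

lemma integrable_mul {φ ψ : ℝ → ℂ} (hφ : MemLp φ 2 (volume.restrict (ival a b)))
    (hψ : MemLp ψ 2 (volume.restrict (ival a b))) :
    Integrable (fun t => φ t * ψ t) (volume.restrict (ival a b)) := by
  rw [← memLp_one_iff_integrable]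
  have h := hψ.smul (φ := φ) hφ (r := (1 : ENNReal))
    (hpqr := ⟨by rw [inv_one]; exact ENNReal.inv_two_add_inv_two⟩)
  exact h

lemma integrable_entry {f g : ℝ → Matrix (Fin N) (Fin N) ℂ}
    (hf : IsSignal a b f) (hg : IsSignal a b g) (k l : Fin N) :
    Integrable (fun t => (f t * (g t)ᴴ) k l) (volume.restrict (ival a b)) := by
  simp only [Matrix.mul_apply, Matrix.conjTranspose_apply]
  exact integrable_finset_sum _ fun m _ => integrable_mul (hf k m) (memLp_star (hg l m))

end Stmt9Aux

namespace Stmt9Aux2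
open Stmt9Aux
variable {N : ℕ} {a b : EReal}

lemma isSignal_const_mul {f : ℝ → Matrix (Fin N) (Fin N) ℂ} (hf : IsSignal a b f)
    (A : Matrix (Fin N) (Fin N) ℂ) : IsSignal a b (fun t => A * f t) := by
  intro k l
  have h : (fun t => (A * f t) k l) = fun t => ∑ m, A k m * f t m l := by
    funext t; rw [Matrix.mul_apply]
  rw [h]
  exact memLp_finset_sum _ fun m _ => (hf m l).const_mul _

lemma isSignal_sub {f h : ℝ → Matrix (Fin N) (Fin N) ℂ} (hf : IsSignal a b f)
    (hh : IsSignal a b h) : IsSignal a b (fun t => f t - h t) := by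
  intro k l
  have heq : (fun t => (f t - h t) k l) = fun t => f t k l - h t k l := by
    funext t; simp [Matrix.sub_apply]
  rw [heq]
  exact (hf k l).sub (hh k l)

lemma mvInner_const_mul (A : Matrix (Fin N) (Fin N) ℂ)
    {f g : ℝ → Matrix (Fin N) (Fin N) ℂ} (hf : IsSignal a b f) (hg : IsSignal a b g) :
    mvInner a b (fun t => A * f t) g = A * mvInner a b f g := by
  ext k l
  have h1 : ∀ t, ((A * f t) * (g t)ᴴ) k l = ∑ m, A k m * ((f t * (g t)ᴴ) m l) := by
    intro t; rw [Matrix.mul_assoc, Matrix.mul_apply]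
  simp only [mvInner, Matrix.of_apply]
  simp_rw [h1]
  rw [integral_finset_sum _ fun m _ => ((integrable_entry hf hg m l).const_mul _),
    Matrix.mul_apply]
  simp_rw [MeasureTheory.integral_const_mul]
  rfl

lemma mvInner_mul_const (B : Matrix (Fin N) (Fin N) ℂ)
    {f g : ℝ → Matrix (Fin N) (Fin N) ℂ} (hf : IsSignal a b f) (hg : IsSignal a b g) :
    mvInner a b f (fun t => B * g t) = mvInner a b f g * Bᴴ := by
  ext k l
  have h1 : ∀ t, (f t * (B * g t)ᴴ) k l = ∑ m, ((f t * (g t)ᴴ) k m) * Bᴴ m l := by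
    intro t; rw [Matrix.conjTranspose_mul, ← Matrix.mul_assoc, Matrix.mul_apply]
  simp only [mvInner, Matrix.of_apply]
  simp_rw [h1]
  rw [integral_finset_sum _ fun m _ => ((integrable_entry hf hg k m).mul_const _),
    Matrix.mul_apply]
  simp_rw [MeasureTheory.integral_mul_const]
  rfl

lemma mvInner_sub_left {f h g : ℝ → Matrix (Fin N) (Fin N) ℂ}
    (hf : IsSignal a b f) (hh : IsSignal a b h) (hg : IsSignal a b g) :
    mvInner a b (fun t => f t - h t) g = mvInner a b f g - mvInner a b h g := by
  ext k l
  have h1 : ∀ t, ((f t - h t) * (g t)ᴴ) k l = (f t * (g t)ᴴ) k l - (h t * (g t)ᴴ) k l := by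
    intro t; rw [Matrix.sub_mul, Matrix.sub_apply]
  simp only [mvInner, Matrix.of_apply, Matrix.sub_apply]
  simp_rw [h1]
  exact MeasureTheory.integral_sub (integrable_entry hf hg k l) (integrable_entry hh hg k l)

end Stmt9Aux2

open Stmt9Aux Stmt9Aux2 in
theorem stmt_9' {N : ℕ} (a b : EReal) (hab : a < b)
    (f₁ f₂ : ℝ → Matrix (Fin N) (Fin N) ℂ)
    (hf₁ : IsSignal a b f₁) (hf₂ : IsSignal a b f₂)
    (hli : ∀ F : Fin 2 → Matrix (Fin N) (Fin N) ℂ,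
      ¬ IsUnit (mvInner a b (fun t => ∑ k, F k * ![f₁,f₂] k t) (fun t => ∑ k, F k * ![f₁,f₂] k t)) →
      ∀ (k : Fin 2) (u : Fin N → ℂ),
        (mvInner a b (fun t => ∑ j, F j * ![f₁,f₂] j t) (fun t => ∑ j, F j * ![f₁,f₂] j t)).mulVec u = 0 →
        ((F k)ᴴ).mulVec u = 0)
    (hpsd : (mvInner a b f₁ f₁).PosSemidef)
    (g₁ : ℝ → Matrix (Fin N) (Fin N) ℂ)
    (hg₁ : g₁ = fun t => (psdSqrt hpsd)⁻¹ * f₁ t)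
    (ghat₂ : ℝ → Matrix (Fin N) (Fin N) ℂ)
    (hghat₂ : ghat₂ = fun t => f₂ t - mvInner a b f₂ g₁ * g₁ t) :
    IsUnit (mvInner a b ghat₂ ghat₂) ∧ mvInner a b ghat₂ g₁ = 0 := by
  classical
  -- a generic way to extract a nonzero kernel vector from a non-invertible matrix
  have kernel : ∀ M : Matrix (Fin N) (Fin N) ℂ, ¬ IsUnit M →
      ∃ u : Fin N → ℂ, u ≠ 0 ∧ M.mulVec u = 0 := by
    intro M hM
    have hdet : M.det = 0 := by
      by_contra h
      exact hM ((Matrix.isUnit_iff_isUnit_det M).mpr (isUnit_iff_ne_zero.mpr h))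
    obtain ⟨u, hu0, huv⟩ := Matrix.exists_mulVec_eq_zero_iff.mpr hdet
    exact ⟨u, hu0, huv⟩
  -- f₁ is nondegenerate
  have hGunit : IsUnit (mvInner a b f₁ f₁) := by
    by_contra hnot
    set F : Fin 2 → Matrix (Fin N) (Fin N) ℂ := ![1, 0] with hF
    have hfun : (fun t => ∑ j, F j * ![f₁, f₂] j t) = f₁ := by
      funext t
      simp [hF, Fin.sum_univ_two]
    have hnot' : ¬ IsUnit (mvInner a b (fun t => ∑ j, F j * ![f₁, f₂] j t)
        (fun t => ∑ j, F j * ![f₁, f₂] j t)) := by rw [hfun]; exact hnot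
    obtain ⟨u, hu0, huv⟩ := kernel _ hnot
    have huv' : (mvInner a b (fun t => ∑ j, F j * ![f₁, f₂] j t)
        (fun t => ∑ j, F j * ![f₁, f₂] j t)).mulVec u = 0 := by rw [hfun]; exact huv
    have hu := hli F hnot' 0 u huv'
    simp [hF] at hu
    exact hu0 hu
  set S := psdSqrt hpsd with hS
  have hS2 : S * S = mvInner a b f₁ f₁ := psdSqrt_mul_self hpsd
  have hSdet : IsUnit S.det := by
    have hdet : S.det * S.det = (mvInner a b f₁ f₁).det := by rw [← Matrix.det_mul, hS2]
    have hGdet := (Matrix.isUnit_iff_isUnit_det _).mp hGunit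
    rw [← hdet] at hGdet
    exact isUnit_of_mul_isUnit_left hGdet
  have hSH : Sᴴ = S := psdSqrt_isHermitian hpsd
  have hSinvH : (S⁻¹)ᴴ = S⁻¹ := by rw [Matrix.conjTranspose_nonsing_inv, hSH]
  have hg₁sig : IsSignal a b g₁ := by rw [hg₁]; exact isSignal_const_mul hf₁ _
  -- ⟨g₁, g₁⟩ = 1
  have hg₁g₁ : mvInner a b g₁ g₁ = 1 := by
    rw [hg₁, mvInner_const_mul _ hf₁ (isSignal_const_mul hf₁ _),
      mvInner_mul_const _ hf₁ hf₁, hSinvH, ← hS2]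
    rw [Matrix.mul_assoc S, Matrix.mul_nonsing_inv S hSdet, Matrix.mul_one,
      Matrix.nonsing_inv_mul S hSdet]
  set C := mvInner a b f₂ g₁ with hC
  -- orthogonality
  have horth : mvInner a b ghat₂ g₁ = 0 := by
    rw [hghat₂]
    rw [mvInner_sub_left hf₂ (isSignal_const_mul hg₁sig C) hg₁sig,
      mvInner_const_mul C hg₁sig hg₁sig, hg₁g₁, Matrix.mul_one, ← hC, sub_self]
  refine ⟨?_, horth⟩
  -- nondegeneracy
  by_contra hnot
  set F : Fin 2 → Matrix (Fin N) (Fin N) ℂ := ![-(C * S⁻¹), 1] with hF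
  have hfun : (fun t => ∑ j, F j * ![f₁, f₂] j t) = ghat₂ := by
    funext t
    simp only [hF, Fin.sum_univ_two, Matrix.cons_val_zero, Matrix.cons_val_one,
      Matrix.head_cons, Matrix.one_mul, hghat₂, hg₁, Matrix.neg_mul]
    rw [Matrix.mul_assoc]
    abel
  have hnot' : ¬ IsUnit (mvInner a b (fun t => ∑ j, F j * ![f₁, f₂] j t)
      (fun t => ∑ j, F j * ![f₁, f₂] j t)) := by rw [hfun]; exact hnot
  obtain ⟨u, hu0, huv⟩ := kernel _ hnot
  have huv' : (mvInner a b (fun t => ∑ j, F j * ![f₁, f₂] j t)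
      (fun t => ∑ j, F j * ![f₁, f₂] j t)).mulVec u = 0 := by rw [hfun]; exact huv
  have hu := hli F hnot' 1 u huv'
  simp [hF] at hu
  exact hu0 hu

/-- first Gram-Schmidt step: `ghat₂ = f₂ − ⟨f₂,g₁⟩g₁` is
nondegenerate and orthogonal to `g₁ = ⟨f₁,f₁⟩^{-1/2} f₁`. -/
theorem stmt_9 {N : ℕ} (a b : EReal) (hab : a < b)
    (f₁ f₂ : ℝ → Matrix (Fin N) (Fin N) ℂ)
    (hf₁ : IsSignal a b f₁) (hf₂ : IsSignal a b f₂)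
    (hli : LinIndep a b ![f₁, f₂])
    (hpsd : (mvInner a b f₁ f₁).PosSemidef)
    (g₁ : ℝ → Matrix (Fin N) (Fin N) ℂ)
    (hg₁ : g₁ = fun t => (psdSqrt hpsd)⁻¹ * f₁ t)
    (ghat₂ : ℝ → Matrix (Fin N) (Fin N) ℂ)
    (hghat₂ : ghat₂ = fun t => f₂ t - mvInner a b f₂ g₁ * g₁ t) :
    IsUnit (mvInner a b ghat₂ ghat₂) ∧ mvInner a b ghat₂ g₁ = 0 :=
  stmt_9' a b hab f₁ f₂ hf₁ hf₂ hli hpsd g₁ hg₁ ghat₂ hghat₂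

end
end

section
/- Let f_1, …, f_K be matrix-valued signals in L²(a,b; ℂ^{N×N}) with Gram-Schmidt orthogonalization f̂_1 = f_1 and f̂_k = f_k − ∑_{l=1}^{k−1} μ_{l,k} f̂_l for k = 2, …, K, where μ_{l,k} = ⟨f_k, f̂_l⟩ ⟨f̂_l, f̂_l⟩^{-1} and each ⟨f̂_l, f̂_l⟩ is invertible. Then for each k = 1, …, K, ‖f_k‖_M ≥ ‖f̂_k‖_M, where ‖g‖_M := ‖⟨g,g⟩‖_F^{1/2}. -/
open MeasureTheory Matrix
open scoped ComplexOrder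

noncomputable section

section Aux

variable {N : ℕ} {a b : EReal}

private lemma memLp_star {μ : Measure ℝ} {v : ℝ → ℂ} (hv : MemLp v 2 μ) :
    MemLp (fun t => star (v t)) 2 μ :=
  hv.of_le (Complex.continuous_conj.comp_aestronglyMeasurable hv.1)
    (Filter.Eventually.of_forall fun t => by simp)

private lemma integrable_mul_star {μ : Measure ℝ} {u v : ℝ → ℂ}
    (hu : MemLp u 2 μ) (hv : MemLp v 2 μ) :
    Integrable (fun t => u t * star (v t)) μ := by
  rw [← memLp_one_iff_integrable]
  exact (memLp_star hv).smul (φ := u) hu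

private lemma mul_ct_apply (B C : Matrix (Fin N) (Fin N) ℂ) (k l : Fin N) :
    (B * Cᴴ) k l = ∑ m, B k m * star (C l m) := by
  simp [Matrix.mul_apply, Matrix.conjTranspose_apply]

private lemma integrable_entry {f g : ℝ → Matrix (Fin N) (Fin N) ℂ}
    (hf : IsSignal a b f) (hg : IsSignal a b g) (k l : Fin N) :
    Integrable (fun t => (f t * (g t)ᴴ) k l) (volume.restrict (ival a b)) := by
  simp only [mul_ct_apply]
  exact integrable_finset_sum _ fun m _ => integrable_mul_star (hf k m) (hg l m)

private lemma mvInner_conjTranspose (f g : ℝ → Matrix (Fin N) (Fin N) ℂ) :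
    (mvInner a b f g)ᴴ = mvInner a b g f := by
  ext k l
  simp only [conjTranspose_apply, mvInner, of_apply]
  rw [show (star (∫ t in ival a b, (f t * (g t)ᴴ) l k) : ℂ)
      = (starRingEnd ℂ) (∫ t in ival a b, (f t * (g t)ᴴ) l k) from rfl,
    ← integral_conj]
  congr 1
  funext t
  simp only [mul_ct_apply]
  rw [show ((starRingEnd ℂ) (∑ m, f t l m * star (g t k m)))
      = star (∑ m, f t l m * star (g t k m)) from rfl]
  rw [star_sum]
  exact Finset.sum_congr rfl fun m _ => by rw [star_mul', star_star]; ring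

private lemma isSignal_add {f g : ℝ → Matrix (Fin N) (Fin N) ℂ}
    (hf : IsSignal a b f) (hg : IsSignal a b g) :
    IsSignal a b (fun t => f t + g t) := by
  intro k l
  have := (hf k l).add (hg k l)
  exact this

private lemma isSignal_sub {f g : ℝ → Matrix (Fin N) (Fin N) ℂ}
    (hf : IsSignal a b f) (hg : IsSignal a b g) :
    IsSignal a b (fun t => f t - g t) := by
  intro k l
  have := (hf k l).sub (hg k l)
  exact this

private lemma isSignal_const_mul (A : Matrix (Fin N) (Fin N) ℂ)
    {g : ℝ → Matrix (Fin N) (Fin N) ℂ} (hg : IsSignal a b g) :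
    IsSignal a b (fun t => A * g t) := by
  intro k l
  have : (fun t => (A * g t) k l) = fun t => ∑ m, A k m * g t m l := by
    funext t; simp [Matrix.mul_apply]
  rw [this]
  exact memLp_finset_sum _ fun m _ => (hg m l).const_mul _

private lemma isSignal_sum {ι : Type*} (s : Finset ι)
    (F : ι → ℝ → Matrix (Fin N) (Fin N) ℂ)
    (hF : ∀ i ∈ s, IsSignal a b (F i)) :
    IsSignal a b (fun t => ∑ i ∈ s, F i t) := by
  intro k l
  have : (fun t => (∑ i ∈ s, F i t) k l) = fun t => ∑ i ∈ s, F i t k l := by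
    funext t; simp [Matrix.sum_apply]
  rw [this]
  exact memLp_finset_sum _ fun i hi => hF i hi k l

private lemma mvInner_add_left {f₁ f₂ g : ℝ → Matrix (Fin N) (Fin N) ℂ}
    (h₁ : IsSignal a b f₁) (h₂ : IsSignal a b f₂) (hg : IsSignal a b g) :
    mvInner a b (fun t => f₁ t + f₂ t) g = mvInner a b f₁ g + mvInner a b f₂ g := by
  ext k l
  simp only [mvInner, of_apply, Matrix.add_apply]
  rw [← integral_add (integrable_entry h₁ hg k l) (integrable_entry h₂ hg k l)]
  congr 1
  funext t
  simp [Matrix.add_mul]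

private lemma mvInner_sub_left {f₁ f₂ g : ℝ → Matrix (Fin N) (Fin N) ℂ}
    (h₁ : IsSignal a b f₁) (h₂ : IsSignal a b f₂) (hg : IsSignal a b g) :
    mvInner a b (fun t => f₁ t - f₂ t) g = mvInner a b f₁ g - mvInner a b f₂ g := by
  ext k l
  simp only [mvInner, of_apply, Matrix.sub_apply]
  rw [← integral_sub (integrable_entry h₁ hg k l) (integrable_entry h₂ hg k l)]
  congr 1
  funext t
  simp [Matrix.sub_mul]

private lemma mvInner_sum_left {ι : Type*} (s : Finset ι)
    (F : ι → ℝ → Matrix (Fin N) (Fin N) ℂ) {g : ℝ → Matrix (Fin N) (Fin N) ℂ}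
    (hF : ∀ i ∈ s, IsSignal a b (F i)) (hg : IsSignal a b g) :
    mvInner a b (fun t => ∑ i ∈ s, F i t) g = ∑ i ∈ s, mvInner a b (F i) g := by
  ext k l
  simp only [mvInner, of_apply, Matrix.sum_apply]
  rw [← integral_finset_sum s (fun i hi => integrable_entry (hF i hi) hg k l)]
  congr 1
  funext t
  rw [Finset.sum_mul]
  simp [Matrix.sum_apply]

private lemma mvInner_const_mul_left (A : Matrix (Fin N) (Fin N) ℂ)
    {h g : ℝ → Matrix (Fin N) (Fin N) ℂ}
    (hh : IsSignal a b h) (hg : IsSignal a b g) :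
    mvInner a b (fun t => A * h t) g = A * mvInner a b h g := by
  ext k l
  have hpt : ∀ t, ((A * h t) * (g t)ᴴ) k l = ∑ m, A k m * ((h t * (g t)ᴴ) m l) := fun t => by
    rw [Matrix.mul_assoc, Matrix.mul_apply]
  show (∫ t in ival a b, ((A * h t) * (g t)ᴴ) k l) = (A * mvInner a b h g) k l
  rw [Matrix.mul_apply]
  simp_rw [hpt]
  rw [integral_finset_sum _ (fun m _ => (integrable_entry hh hg m l).const_mul _)]
  exact Finset.sum_congr rfl fun m _ => by rw [integral_const_mul]; rfl

private lemma mvInner_const_mul_right (A : Matrix (Fin N) (Fin N) ℂ)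
    {f h : ℝ → Matrix (Fin N) (Fin N) ℂ}
    (hf : IsSignal a b f) (hh : IsSignal a b h) :
    mvInner a b f (fun t => A * h t) = mvInner a b f h * Aᴴ := by
  calc mvInner a b f (fun t => A * h t)
      = (mvInner a b (fun t => A * h t) f)ᴴ := (mvInner_conjTranspose _ _).symm
    _ = (A * mvInner a b h f)ᴴ := by rw [mvInner_const_mul_left A hh hf]
    _ = (mvInner a b h f)ᴴ * Aᴴ := by rw [conjTranspose_mul]
    _ = mvInner a b f h * Aᴴ := by rw [mvInner_conjTranspose]

private lemma mvInner_add_right {f g₁ g₂ : ℝ → Matrix (Fin N) (Fin N) ℂ}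
    (hf : IsSignal a b f) (h₁ : IsSignal a b g₁) (h₂ : IsSignal a b g₂) :
    mvInner a b f (fun t => g₁ t + g₂ t) = mvInner a b f g₁ + mvInner a b f g₂ := by
  calc mvInner a b f (fun t => g₁ t + g₂ t)
      = (mvInner a b (fun t => g₁ t + g₂ t) f)ᴴ := (mvInner_conjTranspose _ _).symm
    _ = (mvInner a b g₁ f + mvInner a b g₂ f)ᴴ := by rw [mvInner_add_left h₁ h₂ hf]
    _ = (mvInner a b g₁ f)ᴴ + (mvInner a b g₂ f)ᴴ := by rw [conjTranspose_add]
    _ = mvInner a b f g₁ + mvInner a b f g₂ := by rw [mvInner_conjTranspose, mvInner_conjTranspose]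

private lemma mvInner_self_diag_nonneg {f : ℝ → Matrix (Fin N) (Fin N) ℂ}
    (hf : IsSignal a b f) (i : Fin N) :
    0 ≤ mvInner a b f f i i := by
  have hpt : (fun t => (f t * (f t)ᴴ) i i)
      = fun t => ((∑ m, Complex.normSq (f t i m) : ℝ) : ℂ) := by
    funext t
    rw [mul_ct_apply]
    push_cast
    exact Finset.sum_congr rfl fun m _ => (Complex.mul_conj _)
  show 0 ≤ ∫ t in ival a b, (f t * (f t)ᴴ) i i
  rw [hpt,
    show (∫ t in ival a b, ((∑ m, Complex.normSq (f t i m) : ℝ) : ℂ))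
      = ((∫ t in ival a b, ∑ m, Complex.normSq (f t i m) : ℝ) : ℂ) from integral_ofReal,
    Complex.zero_le_real]
  exact integral_nonneg fun t => Finset.sum_nonneg fun m _ => Complex.normSq_nonneg _

private lemma mvInner_self_posSemidef {f : ℝ → Matrix (Fin N) (Fin N) ℂ}
    (hf : IsSignal a b f) : (mvInner a b f f).PosSemidef := by
  refine posSemidef_iff_dotProduct_mulVec.mpr ⟨mvInner_conjTranspose f f, ?_⟩
  intro u
  rcases Nat.eq_zero_or_pos N with hN | hN
  · subst hN
    simp [dotProduct]
  · set A : Matrix (Fin N) (Fin N) ℂ := Matrix.of (fun _ m => star (u m)) with hA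
    have hAf : IsSignal a b (fun t => A * f t) := isSignal_const_mul A hf
    have h1 : mvInner a b (fun t => A * f t) (fun t => A * f t)
        = A * mvInner a b f f * Aᴴ := by
      rw [mvInner_const_mul_left A hf hAf, mvInner_const_mul_right A hf hf, Matrix.mul_assoc]
    have h2 := mvInner_self_diag_nonneg hAf ⟨0, hN⟩
    rw [h1] at h2
    have h3 : (A * mvInner a b f f * Aᴴ) ⟨0, hN⟩ ⟨0, hN⟩
        = star u ⬝ᵥ (mvInner a b f f).mulVec u := by
      simp only [Matrix.mul_apply, Matrix.conjTranspose_apply, hA, Matrix.of_apply,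
        star_star, dotProduct, Matrix.mulVec, Finset.sum_mul, Finset.mul_sum]
      rw [Finset.sum_comm]
      exact Finset.sum_congr rfl fun k _ => Finset.sum_congr rfl fun l _ => by
        simp [Pi.star_apply]; ring
    rwa [h3] at h2

private lemma psd_diag_nonneg {n : ℕ} {M : Matrix (Fin n) (Fin n) ℂ}
    (hM : M.PosSemidef) (i : Fin n) : 0 ≤ M i i := by
  have h := hM.dotProduct_mulVec_nonneg (Pi.single i 1)
  simpa [dotProduct, Matrix.mulVec, Pi.single_apply, Finset.sum_ite_eq, Finset.sum_ite_eq']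
    using h

private lemma psd_trace_nonneg {n : ℕ} {M : Matrix (Fin n) (Fin n) ℂ}
    (hM : M.PosSemidef) : 0 ≤ M.trace :=
  Finset.sum_nonneg fun i _ => psd_diag_nonneg hM i

private lemma trace_mul_psd_nonneg {n : ℕ} {A B : Matrix (Fin n) (Fin n) ℂ}
    (hA : A.PosSemidef) (hB : B.PosSemidef) : 0 ≤ (A * B).trace := by
  have h := (hA.hadamard hB.transpose).dotProduct_mulVec_nonneg (fun _ => 1)
  have key : (A * B).trace = star (fun _ : Fin n => (1 : ℂ)) ⬝ᵥ ((A ⊙ Bᵀ) *ᵥ fun _ => 1) := by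
    simp [Matrix.trace, Matrix.mul_apply, dotProduct, mulVec, hadamard_apply]
  rw [key]
  exact h

private lemma frobNorm_le_frobNorm_add {n : ℕ} {A C : Matrix (Fin n) (Fin n) ℂ}
    (hA : A.PosSemidef) (hC : C.PosSemidef) : frobNorm A ≤ frobNorm (A + C) := by
  apply Real.sqrt_le_sqrt
  have htr : 0 ≤ (A * C).trace := trace_mul_psd_nonneg hA hC
  have htr_re : 0 ≤ ((A * C).trace).re := (Complex.le_def.mp htr).1
  have hcross : ((A * C).trace) = ∑ k, ∑ l, A k l * star (C k l) := by
    have h1 : A * C = A * Cᴴ := by rw [hC.1]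
    rw [h1]
    simp [Matrix.trace, Matrix.diag, Matrix.mul_apply, Matrix.conjTranspose_apply]
  have expand : ∀ k l : Fin n, ‖(A + C) k l‖ ^ 2
      = ‖A k l‖ ^ 2 + Complex.normSq (C k l)
        + 2 * (A k l * star (C k l)).re := by
    intro k l
    simp only [Matrix.add_apply, Complex.sq_norm]
    rw [Complex.normSq_add]
    rfl
  have key : ∑ k, ∑ l, ‖(A + C) k l‖ ^ 2
      = (∑ k, ∑ l, ‖A k l‖ ^ 2)
        + ((∑ k, ∑ l, Complex.normSq (C k l)) + 2 * ((A * C).trace).re) := by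
    simp_rw [expand, Finset.sum_add_distrib, ← Finset.mul_sum, hcross, Complex.re_sum]
    ring
  rw [key]
  have h2 : 0 ≤ ∑ k, ∑ l : Fin n, Complex.normSq (C k l) :=
    Finset.sum_nonneg fun k _ => Finset.sum_nonneg fun l _ => Complex.normSq_nonneg _
  linarith

end Aux

/-- with the Gram-Schmidt orthogonalization of statement 14,
`‖f_k‖_M ≥ ‖f̂_k‖_M`, where `‖g‖_M = ‖⟨g,g⟩‖_F^{1/2}`. -/
theorem stmt_16 {N K : ℕ} (a b : EReal) (hab : a < b)
    (f fhat : Fin K → ℝ → Matrix (Fin N) (Fin N) ℂ) (hf : ∀ k, IsSignal a b (f k))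
    (μ : Fin K → Fin K → Matrix (Fin N) (Fin N) ℂ)
    (hμ : ∀ l k, μ l k = mvInner a b (f k) (fhat l) * (mvInner a b (fhat l) (fhat l))⁻¹)
    (hinv : ∀ l, IsUnit (mvInner a b (fhat l) (fhat l)))
    (hrec : ∀ k, fhat k = fun t => f k t - ∑ l ∈ Finset.Iio k, μ l k * fhat l t) :
    ∀ k : Fin K,
      Real.sqrt (frobNorm (mvInner a b (fhat k) (fhat k))) ≤
        Real.sqrt (frobNorm (mvInner a b (f k) (f k))) := by
  -- all the `fhat k` are signals
  have hsig : ∀ k : Fin K, IsSignal a b (fhat k) := by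
    have H : ∀ n : ℕ, ∀ k : Fin K, (k : ℕ) < n → IsSignal a b (fhat k) := by
      intro n
      induction n with
      | zero => intro k hk; omega
      | succ n ih =>
        intro k hk
        rw [hrec k]
        refine isSignal_sub (hf k) (isSignal_sum _ _ fun j hj => ?_)
        refine isSignal_const_mul _ (ih j ?_)
        have hjk : (j : ℕ) < (k : ℕ) := Fin.lt_def.mp (Finset.mem_Iio.mp hj)
        omega
    exact fun k => H ((k : ℕ) + 1) k (Nat.lt_succ_self _)
  -- orthogonality of the `fhat`
  have horth : ∀ k l : Fin K, l < k → mvInner a b (fhat k) (fhat l) = 0 := by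
    have H : ∀ n : ℕ, ∀ k : Fin K, (k : ℕ) < n → ∀ l, l < k →
        mvInner a b (fhat k) (fhat l) = 0 := by
      intro n
      induction n with
      | zero => intro k hk; omega
      | succ n ih =>
        intro k hk l hlk
        have hIio : ∀ j ∈ Finset.Iio k, IsSignal a b (fun t => μ j k * fhat j t) :=
          fun j _ => isSignal_const_mul _ (hsig j)
        have hkl_sum : mvInner a b (fhat k) (fhat l)
            = mvInner a b (f k) (fhat l)
              - ∑ j ∈ Finset.Iio k, μ j k * mvInner a b (fhat j) (fhat l) := by
          conv_lhs => rw [hrec k]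
          rw [mvInner_sub_left (hf k) (isSignal_sum _ _ hIio) (hsig l),
            mvInner_sum_left _ _ hIio (hsig l)]
          congr 1
          exact Finset.sum_congr rfl fun j _ =>
            mvInner_const_mul_left _ (hsig j) (hsig l)
        have hsum : ∑ j ∈ Finset.Iio k, μ j k * mvInner a b (fhat j) (fhat l)
            = μ l k * mvInner a b (fhat l) (fhat l) := by
          apply Finset.sum_eq_single_of_mem l (Finset.mem_Iio.mpr hlk)
          intro j hj hne
          have hjk : j < k := Finset.mem_Iio.mp hj
          rcases lt_or_gt_of_ne hne with hjl | hlj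
          · have h0 : mvInner a b (fhat l) (fhat j) = 0 := by
              refine ih l ?_ j hjl
              have := Fin.lt_def.mp hlk; omega
            rw [← mvInner_conjTranspose, h0, conjTranspose_zero, mul_zero]
          · have h0 : mvInner a b (fhat j) (fhat l) = 0 := by
              refine ih j ?_ l hlj
              have := Fin.lt_def.mp hjk; omega
            rw [h0, mul_zero]
        rw [hkl_sum, hsum, hμ l k, Matrix.mul_assoc,
          Matrix.nonsing_inv_mul _ ((Matrix.isUnit_iff_isUnit_det _).mp (hinv l)),
          Matrix.mul_one, sub_self]
    exact fun k l h => H ((k : ℕ) + 1) k (Nat.lt_succ_self _) l h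
  -- main argument
  intro k
  apply Real.sqrt_le_sqrt
  set g : ℝ → Matrix (Fin N) (Fin N) ℂ :=
    fun t => ∑ j ∈ Finset.Iio k, μ j k * fhat j t with hgdef
  have hIio : ∀ j ∈ Finset.Iio k, IsSignal a b (fun t => μ j k * fhat j t) :=
    fun j _ => isSignal_const_mul _ (hsig j)
  have hgsig : IsSignal a b g := isSignal_sum _ _ hIio
  have hfk : f k = fun t => fhat k t + g t := by
    funext t
    have h := congrFun (hrec k) t
    rw [h, hgdef, sub_add_cancel]
  have hgf : mvInner a b g (fhat k) = 0 := by
    rw [hgdef, mvInner_sum_left _ _ hIio (hsig k)]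
    refine Finset.sum_eq_zero fun j hj => ?_
    rw [mvInner_const_mul_left _ (hsig j) (hsig k)]
    have h0 : mvInner a b (fhat j) (fhat k) = 0 := by
      rw [← mvInner_conjTranspose, horth k j (Finset.mem_Iio.mp hj), conjTranspose_zero]
    rw [h0, mul_zero]
  have hfg : mvInner a b (fhat k) g = 0 := by
    rw [← mvInner_conjTranspose, hgf, conjTranspose_zero]
  have hM : mvInner a b (f k) (f k)
      = mvInner a b (fhat k) (fhat k) + mvInner a b g g := by
    rw [hfk]
    rw [mvInner_add_left (hsig k) hgsig (isSignal_add (hsig k) hgsig),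
      mvInner_add_right (hsig k) (hsig k) hgsig,
      mvInner_add_right hgsig (hsig k) hgsig, hfg, hgf, add_zero, zero_add]
  rw [hM]
  exact frobNorm_le_frobNorm_add (mvInner_self_posSemidef (hsig k))
    (mvInner_self_posSemidef hgsig)

end
end
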